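/- Let f : ℝ^n → ℝ be twice continuously differentiable and let A be a symmetric n×n real matrix such that f(exp(λA) x) = f(x) for all x ∈ ℝ^n and all λ ∈ ℝ. Then for every θ ∈ ℝ^n and every λ ∈ ℝ, the trace of the Hessian satisfies Tr(Hess f (exp(λA) θ)) = Tr(exp(−2λA) · Hess f(θ)). -/

import Mathlib

open Matrix

/-- The Hessian matrix of `f : ℝ^n → ℝ` at `x`, with entries the second partial
derivatives, obtained from the second iterated Fréchet derivative. -/
noncomputable def hessianMatrix {n : ℕ} (f : (Fin n → ℝ) → ℝ) (x : Fin n → ℝ) :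
    Matrix (Fin n) (Fin n) ℝ :=
  Matrix.of fun i j => iteratedFDeriv ℝ 2 f x ![Pi.single i 1, Pi.single j 1]

private def e {n : ℕ} (k : Fin n) : Fin n → ℝ := Pi.single k 1

private lemma bilin_expand {n : ℕ} (B : ContinuousMultilinearMap ℝ (fun _ : Fin 2 => (Fin n → ℝ)) ℝ)
    (a b : Fin n → ℝ) :
    B ![∑ k, a k • e k, ∑ l, b l • e l]
      = ∑ k, ∑ l, a k * b l * B ![e k, e l] := by
  have hu0 : ∀ (x y : Fin n → ℝ), Function.update ![x, y] 0 = fun z => ![z, y] := by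
    intro x y; funext z i; fin_cases i <;> simp
  have hu1 : ∀ (x y : Fin n → ℝ), Function.update ![x, y] 1 = fun z => ![x, z] := by
    intro x y; funext z i; fin_cases i <;> simp
  have h1 : B ![∑ k, a k • e k, ∑ l, b l • e l]
      = ∑ k, a k • B ![e k, ∑ l, b l • e l] := by
    rw [show (![∑ k, a k • e k, ∑ l, b l • e l] : Fin 2 → Fin n → ℝ)
        = Function.update ![0, ∑ l, b l • e l] 0 (∑ k, a k • e k) from by rw [hu0]]
    rw [← B.coe_coe, B.toMultilinearMap.map_update_sum]
    simp only [MultilinearMap.map_update_smul]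
    simp only [hu0]
  rw [h1]
  congr 1; funext k
  have h2 : B ![e k, ∑ l, b l • e l]
      = ∑ l, b l • B ![e k, e l] := by
    rw [show (![e k, ∑ l, b l • e l] : Fin 2 → Fin n → ℝ)
        = Function.update ![e k, 0] 1 (∑ l, b l • e l) from by rw [hu1]]
    rw [← B.coe_coe, B.toMultilinearMap.map_update_sum]
    simp only [MultilinearMap.map_update_smul]
    simp only [hu1]
  rw [h2, Finset.smul_sum]
  congr 1; funext l
  simp [smul_smul]
  ring


/-- If `f : ℝ^n → ℝ` is `C²` and `A` is a symmetric matrix such that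
`f (exp (λ A) x) = f x` for all `x` and `λ`, then
`Tr (Hess f (exp (λ A) θ)) = Tr (exp (−2 λ A) ⬝ Hess f θ)` for all `θ` and `λ`. -/
theorem trace_hessian_exp_symmetry {n : ℕ} (f : (Fin n → ℝ) → ℝ)
    (hf : ContDiff ℝ 2 f) (A : Matrix (Fin n) (Fin n) ℝ) (hA : Aᵀ = A)
    (hinv : ∀ (lam : ℝ) (x : Fin n → ℝ),
      f ((NormedSpace.exp (lam • A)).mulVec x) = f x) :
    ∀ (θ : Fin n → ℝ) (lam : ℝ),
      (hessianMatrix f ((NormedSpace.exp (lam • A)).mulVec θ)).trace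
        = (NormedSpace.exp ((-2 * lam) • A) * hessianMatrix f θ).trace := by
  intro θ lam
  set M : Matrix (Fin n) (Fin n) ℝ := NormedSpace.exp (lam • A) with hM
  set N : Matrix (Fin n) (Fin n) ℝ := NormedSpace.exp ((-lam) • A) with hN
  -- the continuous linear map of multiplication by M
  let g : (Fin n → ℝ) →L[ℝ] (Fin n → ℝ) := (Matrix.mulVecLin M).toContinuousLinearMap
  have hg : ∀ x, g x = M.mulVec x := fun x => rfl
  have hcomp : f ∘ g = f := funext fun x => hinv lam x
  have hit : iteratedFDeriv ℝ 2 f θ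
      = (iteratedFDeriv ℝ 2 f (g θ)).compContinuousLinearMap fun _ => g := by
    conv_lhs => rw [← hcomp]
    exact g.iteratedFDeriv_comp_right hf θ le_rfl
  -- Hessian transformation
  have key : hessianMatrix f θ = Mᵀ * hessianMatrix f (M.mulVec θ) * M := by
    ext i j
    have hcol : ∀ i : Fin n, g (e i) = ∑ k, (M k i) • e k := by
      intro i
      funext r
      simp [hg, e, Matrix.mulVec_single, Finset.sum_apply, Pi.single_apply]
    have : hessianMatrix f θ i j
        = iteratedFDeriv ℝ 2 f (g θ) ![g (e i), g (e j)] := by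
      show iteratedFDeriv ℝ 2 f θ ![e i, e j] = _
      rw [hit, ContinuousMultilinearMap.compContinuousLinearMap_apply]
      congr 1
      funext r; fin_cases r <;> simp
    rw [this, hcol, hcol, bilin_expand]
    simp only [Matrix.mul_apply, Matrix.transpose_apply, Finset.sum_mul, Finset.mul_sum]
    rw [Finset.sum_comm]
    refine Finset.sum_congr rfl fun k _ => Finset.sum_congr rfl fun l _ => ?_
    simp only [hessianMatrix, Matrix.of_apply, e]
    rw [hg]
    ring
  -- matrix exponential facts
  have hMT : Mᵀ = M := by
    rw [hM, ← Matrix.exp_transpose, Matrix.transpose_smul, hA]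
  have hNM : N * M = 1 := by
    rw [hN, hM, ← Matrix.exp_add_of_commute _ _ (((Commute.refl A).smul_left _).smul_right _)]
    rw [← add_smul, neg_add_cancel, zero_smul, NormedSpace.exp_zero]
  have hMN : M * N = 1 := by
    rw [hN, hM, ← Matrix.exp_add_of_commute _ _ (((Commute.refl A).smul_left _).smul_right _)]
    rw [← add_smul, add_neg_cancel, zero_smul, NormedSpace.exp_zero]
  have hNN : N * N = NormedSpace.exp ((-2 * lam) • A) := by
    rw [hN, ← Matrix.exp_add_of_commute _ _ (((Commute.refl A).smul_left _).smul_right _)]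
    rw [← add_smul]
    congr 2
    ring
  have hH : hessianMatrix f (M.mulVec θ) = N * hessianMatrix f θ * N := by
    rw [key, hMT]
    calc hessianMatrix f (M.mulVec θ)
        = (N * M) * hessianMatrix f (M.mulVec θ) * (M * N) := by rw [hNM, hMN, one_mul, mul_one]
      _ = N * (M * hessianMatrix f (M.mulVec θ) * M) * N := by noncomm_ring
  rw [hH, Matrix.trace_mul_cycle, hNN]
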